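/- arXiv:1902.10142 — 3 statements merged into one kernel-verified Lean document; each statement's English description precedes it below -/
import Mathlib

section
/- Let p and q be probability distributions on a finite set T, let h(x) := q(x) − p(x), and let ⊏ be a strict total order on T such that h(x) > h(x') implies x ⊏ x' and h(x) < h(x') implies x' ⊏ x. Then P(R_{p,q} = 0) ≥ 1/2 + (1/2)·(max_{x ∈ T} (q(x) − p(x)))². -/
open MeasureTheory ProbabilityTheory
open scoped ENNReal

noncomputable section

/-- A fair coin: the Bernoulli(1/2) distribution on `Bool`. -/
def fairCoin : Measure Bool := (PMF.bernoulli 2⁻¹ (by norm_num)).toMeasure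

instance : IsProbabilityMeasure fairCoin := PMF.toMeasure.isProbabilityMeasure _

/-- `P(R_{p,q} = 0)` for the `m = 1` stochastic rank statistic: sample `X ~ p`, `Y ~ q`
and a fair coin `c`, all mutually independent (so the joint law is the product measure);
`R_{p,q} = 0` iff `Y ⊏ X`, or `X = Y` and the tie-breaking coin comes up heads. -/
def probR0 {T : Type} [MeasurableSpace T] (rlt : T → T → Prop) (p q : PMF T) : ℝ≥0∞ :=
  ((p.toMeasure.prod q.toMeasure).prod fairCoin)
    {z : (T × T) × Bool | rlt z.1.2 z.1.1 ∨ (z.1.1 = z.1.2 ∧ z.2 = true)}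

/-- `P(R_{p,q} = 0 | X ∈ B, Y ∈ C)`: the conditional probability of the event
`R_{p,q} = 0` given `X ∈ B` and `Y ∈ C`, in the setting of `probR0`. -/
def probR0cond {T : Type} [MeasurableSpace T] (rlt : T → T → Prop) (p q : PMF T)
    (B C : Set T) : ℝ≥0∞ :=
  (((p.toMeasure.prod q.toMeasure).prod fairCoin)[|{z : (T × T) × Bool |
      z.1.1 ∈ B ∧ z.1.2 ∈ C}])
    {z : (T × T) × Bool | rlt z.1.2 z.1.1 ∨ (z.1.1 = z.1.2 ∧ z.2 = true)}


lemma fairCoin_singleton (c : Bool) : fairCoin {c} = 2⁻¹ := by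
  rw [fairCoin, PMF.toMeasure_apply_singleton _ _ (measurableSet_singleton c)]
  cases c
  · simp [PMF.bernoulli_apply, ENNReal.one_sub_inv_two]
  · simp [PMF.bernoulli_apply]

open Classical in
lemma probR0_eq_sum {T : Type} [Fintype T] [MeasurableSpace T] [MeasurableSingletonClass T]
    (rlt : T → T → Prop) (p q : PMF T) :
    probR0 rlt p q = ∑ x : T, ∑ y : T, p x * q y *
      (if rlt y x then 1 else if x = y then (2 : ℝ≥0∞)⁻¹ else 0) := by
  have hmeas : ∀ s : Set ((T × T) × Bool), MeasurableSet s := fun s => s.toFinite.measurableSet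
  have hsing : ∀ (x y : T) (c : Bool),
      ((p.toMeasure.prod q.toMeasure).prod fairCoin) {((x, y), c)} = p x * q y * 2⁻¹ := by
    intro x y c
    rw [← Set.singleton_prod_singleton, Measure.prod_prod, ← Set.singleton_prod_singleton,
      Measure.prod_prod, PMF.toMeasure_apply_singleton _ _ (measurableSet_singleton _),
      PMF.toMeasure_apply_singleton _ _ (measurableSet_singleton _), fairCoin_singleton]
  rw [probR0, ← lintegral_indicator_one (hmeas _), lintegral_fintype]
  rw [Fintype.sum_prod_type]
  rw [Fintype.sum_prod_type]
  refine Finset.sum_congr rfl fun x _ => Finset.sum_congr rfl fun y _ => ?_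
  rw [Fintype.sum_bool, hsing, hsing]
  by_cases hxy : rlt y x
  · simp only [Set.indicator_apply, Set.mem_setOf_eq, hxy, true_or, if_true, Pi.one_apply,
      one_mul]
    rw [← mul_add, ENNReal.inv_two_add_inv_two]
  · by_cases heq : x = y
    · subst heq
      simp only [Set.indicator_apply, Set.mem_setOf_eq, hxy, false_or, true_and, and_true,
        Pi.one_apply, if_neg hxy, if_pos rfl]
      simp [hxy]
    · simp only [Set.indicator_apply, Set.mem_setOf_eq, hxy, heq, false_or, false_and,
        Pi.one_apply, if_neg hxy, if_neg heq]
      simp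

open Finset


open Classical in
lemma core_ineq {T : Type} [Fintype T] [Nonempty T]
    (rlt : T → T → Prop) (hr : IsStrictTotalOrder T rlt)
    (pr qr : T → ℝ) (hp0 : ∀ x, 0 ≤ pr x) (hq0 : ∀ x, 0 ≤ qr x)
    (hps : ∑ x, pr x = 1) (hqs : ∑ x, qr x = 1)
    (horder₁ : ∀ x x', qr x - pr x > qr x' - pr x' → rlt x x')
    (horder₂ : ∀ x x', qr x - pr x < qr x' - pr x' → rlt x' x) :
    1 / 2 + 1 / 2 * (Finset.univ.sup' Finset.univ_nonempty (fun x => qr x - pr x)) ^ 2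
      ≤ ∑ x, ∑ y, pr x * qr y * (if rlt y x then 1 else if x = y then (2:ℝ)⁻¹ else 0) := by
  haveI := hr
  have hasymm : ∀ a b, rlt a b → ¬ rlt b a := fun a b h1 h2 =>
    (irrefl_of rlt a) (_root_.trans h1 h2)
  have hirr : ∀ a, ¬ rlt a a := fun a => irrefl_of rlt a
  have htri : ∀ a b, rlt a b ∨ a = b ∨ rlt b a := fun a b => trichotomous_of rlt a b
  have hne : ∀ a b, rlt a b → a ≠ b := fun a b hab e => (irrefl_of rlt b) (e ▸ hab)
  set h : T → ℝ := fun x => qr x - pr x with hh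
  have hsum0 : ∑ x, h x = 0 := by
    simp only [hh, Finset.sum_sub_distrib, hps, hqs, sub_self]
  have hmono : ∀ a b, rlt a b → h b ≤ h a := by
    intro a b hab
    by_contra hlt
    push_neg at hlt
    exact hasymm a b hab (horder₂ a b hlt)
  -- prefix sums
  set Hl : T → ℝ := fun x => ∑ y, if rlt y x then h y else 0 with hHl
  set Gl : T → ℝ := fun x => ∑ y, if rlt x y then h y else 0 with hGl
  set Hc : T → ℝ := fun x => Hl x + h x with hHc
  have hpart : ∀ x, Hl x + h x + Gl x = 0 := by
    intro x
    have : Hl x + h x + Gl x =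
        ∑ y, ((if rlt y x then h y else 0) + (if y = x then h y else 0)
          + (if rlt x y then h y else 0)) := by
      rw [Finset.sum_add_distrib, Finset.sum_add_distrib, Finset.sum_ite_eq' Finset.univ x h]
      simp [hHl, hGl]
    have e : ∑ y, ((if rlt y x then h y else 0) + (if y = x then h y else 0)
        + (if rlt x y then h y else 0)) = ∑ y, h y := by
      refine Finset.sum_congr rfl fun y _ => ?_
      rcases htri y x with hyx | rfl | hxy
      · rw [if_pos hyx, if_neg (hne y x hyx), if_neg (hasymm y x hyx)]
        ring
      · rw [if_neg (hirr y), if_pos rfl]; ring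
      · rw [if_neg (hasymm x y hxy), if_neg (Ne.symm (hne x y hxy)), if_pos hxy]; ring
    rw [this, e, hsum0]
  have hHl0 : ∀ x, 0 ≤ Hl x := by
    intro x
    rcases le_or_gt 0 (h x) with hx | hx
    · refine Finset.sum_nonneg fun y _ => ?_
      split_ifs with hyx
      · exact le_trans hx (hmono y x hyx)
      · exact le_refl (0:ℝ)
    · have hGlx : Gl x ≤ 0 := by
        refine Finset.sum_nonpos fun y _ => ?_
        split_ifs with hxy
        · exact le_trans (hmono x y hxy) (le_of_lt hx)
        · exact le_refl (0:ℝ)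
      have := hpart x
      linarith
  have hGl0 : ∀ x, Gl x ≤ 0 ∨ 0 ≤ h x := by
    intro x
    rcases le_or_gt 0 (h x) with hx | hx
    · exact Or.inr hx
    · left
      refine Finset.sum_nonpos fun y _ => ?_
      split_ifs with hxy
      · exact le_trans (hmono x y hxy) (le_of_lt hx)
      · exact le_refl (0:ℝ)
  have hHc0 : ∀ x, 0 ≤ Hc x := by
    intro x
    rcases hGl0 x with hgl | hx
    · have := hpart x; simp only [hHc]; linarith
    · have := hHl0 x; simp only [hHc]; linarith
  -- the telescoping identity
  have hC : ∑ x, h x * Gl x = ∑ x, h x * Hl x := by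
    have l1 : ∀ x, h x * Gl x = ∑ y, if rlt x y then h x * h y else 0 := by
      intro x
      rw [hGl, Finset.mul_sum]
      exact Finset.sum_congr rfl fun y _ => by split_ifs <;> simp
    have l2 : ∀ y, h y * Hl y = ∑ x, if rlt x y then h x * h y else 0 := by
      intro y
      rw [hHl, Finset.mul_sum]
      refine Finset.sum_congr rfl fun x _ => by split_ifs <;> ring_nf <;> simp
    calc ∑ x, h x * Gl x = ∑ x, ∑ y, if rlt x y then h x * h y else 0 :=
          Finset.sum_congr rfl fun x _ => l1 x
      _ = ∑ y, ∑ x, if rlt x y then h x * h y else 0 := Finset.sum_comm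
      _ = ∑ y, h y * Hl y := Finset.sum_congr rfl fun y _ => (l2 y).symm
  have hE : ∑ x, h x * (Hl x + Hc x) = 0 := by
    have : ∀ x, h x * (Hl x + Hc x) = h x * Hl x - h x * Gl x + h x * (Hl x + h x + Gl x) := by
      intro x; simp only [hHc]; ring
    rw [Finset.sum_congr rfl fun x _ => this x]
    rw [Finset.sum_add_distrib, Finset.sum_sub_distrib, hC]
    have : ∑ x, h x * (Hl x + h x + Gl x) = 0 := by
      refine Finset.sum_eq_zero fun x _ => ?_
      rw [hpart x, mul_zero]
    rw [this]; ring
  -- the double sum identity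
  set S : ℝ := ∑ x, ∑ y, pr x * qr y * (if rlt y x then 1 else if x = y then (2:ℝ)⁻¹ else 0)
    with hS
  set D : ℝ := ∑ x, ∑ y, (if rlt y x then pr x * h y - pr y * h x else 0) with hD
  have h2S : S + S = 1 + D := by
    have hswap : S = ∑ x, ∑ y, pr y * qr x * (if rlt x y then 1 else if y = x then (2:ℝ)⁻¹ else 0) := by
      rw [hS, Finset.sum_comm]
    calc S + S
        = ∑ x, ∑ y, (pr x * qr y * (if rlt y x then 1 else if x = y then (2:ℝ)⁻¹ else 0)
            + pr y * qr x * (if rlt x y then 1 else if y = x then (2:ℝ)⁻¹ else 0)) := by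
          nth_rewrite 1 [hS]
          nth_rewrite 1 [hswap]
          rw [← Finset.sum_add_distrib]
          exact Finset.sum_congr rfl fun x _ => by rw [← Finset.sum_add_distrib]
      _ = ∑ x, ∑ y, (pr y * qr x + (if rlt y x then pr x * h y - pr y * h x else 0)) := by
          refine Finset.sum_congr rfl fun x _ => Finset.sum_congr rfl fun y _ => ?_
          rcases htri y x with hyx | heq | hxy
          · rw [if_pos hyx, if_neg (hasymm y x hyx), if_neg (hne y x hyx), if_pos hyx]
            simp only [hh]; ring
          · have h1 : ¬ rlt y x := fun hc => hirr x (heq ▸ hc)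
            have h2 : ¬ rlt x y := fun hc => hirr x (heq ▸ hc)
            rw [if_neg h1, if_neg h2, if_pos heq.symm, if_pos heq, heq]
            rw [if_neg (hirr x)]
            ring
          · rw [if_neg (hasymm x y hxy), if_neg (hne x y hxy), if_pos hxy,
              if_neg (hasymm x y hxy)]
            ring
      _ = (∑ x, ∑ y, pr y * qr x) + D := by
          rw [hD, ← Finset.sum_add_distrib]
          exact Finset.sum_congr rfl fun x _ => by rw [← Finset.sum_add_distrib]
      _ = 1 + D := by
          have : ∑ x, ∑ y, pr y * qr x = 1 := by
            have : ∀ x, ∑ y, pr y * qr x = qr x := by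
              intro x; rw [← Finset.sum_mul, hps, one_mul]
            rw [Finset.sum_congr rfl fun x _ => this x, hqs]
          rw [this]
  -- D as sum of pr * (Hl + Hc)
  have hDval : D = ∑ x, pr x * (Hl x + Hc x) := by
    have e1 : D = (∑ x, ∑ y, (if rlt y x then pr x * h y else 0))
        - ∑ x, ∑ y, (if rlt y x then pr y * h x else 0) := by
      rw [hD, ← Finset.sum_sub_distrib]
      refine Finset.sum_congr rfl fun x _ => ?_
      rw [← Finset.sum_sub_distrib]
      exact Finset.sum_congr rfl fun y _ => by split_ifs <;> ring
    have e2 : ∑ x, ∑ y, (if rlt y x then pr x * h y else 0) = ∑ x, pr x * Hl x := by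
      refine Finset.sum_congr rfl fun x _ => ?_
      rw [hHl, Finset.mul_sum]
      exact Finset.sum_congr rfl fun y _ => by split_ifs <;> simp
    have e3 : ∑ x, ∑ y, (if rlt y x then pr y * h x else 0) = ∑ x, pr x * (- Hc x) := by
      rw [Finset.sum_comm]
      refine Finset.sum_congr rfl fun y _ => ?_
      have : ∑ x, (if rlt y x then pr y * h x else 0) = pr y * Gl y := by
        rw [hGl, Finset.mul_sum]
        exact Finset.sum_congr rfl fun x _ => by split_ifs <;> simp
      rw [this]
      have := hpart y
      have : Gl y = - Hc y := by simp only [hHc]; linarith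
      rw [this]
    rw [e1, e2, e3, ← Finset.sum_sub_distrib]
    exact Finset.sum_congr rfl fun x _ => by ring
  -- the argmax
  obtain ⟨xs, -, hxs⟩ := Finset.exists_mem_eq_sup' Finset.univ_nonempty
    (fun x : T => qr x - pr x)
  have hM : Finset.univ.sup' Finset.univ_nonempty (fun x : T => qr x - pr x) = h xs := hxs
  have hM0 : 0 ≤ h xs := by
    by_contra hneg
    push_neg at hneg
    have : ∑ x, h x < ∑ x : T, (0:ℝ) := by
      refine Finset.sum_lt_sum_of_nonempty Finset.univ_nonempty fun x _ => ?_
      have : h x ≤ h xs := hM ▸ Finset.le_sup' (fun x : T => qr x - pr x) (Finset.mem_univ x)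
      linarith
    simp [hsum0] at this
  -- lower bound on D
  have hDbound : h xs * h xs ≤ D := by
    have hA : ∀ x, 0 ≤ Hl x + Hc x := fun x => add_nonneg (hHl0 x) (hHc0 x)
    have hprh : ∀ x, - h x ≤ pr x := by intro x; have := hq0 x; simp only [hh]; linarith
    have step1 : ∀ x, - h x * (Hl x + Hc x) ≤ pr x * (Hl x + Hc x) := fun x =>
      mul_le_mul_of_nonneg_right (hprh x) (hA x)
    have hsplit : D = pr xs * (Hl xs + Hc xs)
        + ∑ x ∈ Finset.univ.erase xs, pr x * (Hl x + Hc x) := by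
      rw [hDval, ← Finset.add_sum_erase _ _ (Finset.mem_univ xs)]
    have hrest : ∑ x ∈ Finset.univ.erase xs, (- h x) * (Hl x + Hc x)
        ≤ ∑ x ∈ Finset.univ.erase xs, pr x * (Hl x + Hc x) :=
      Finset.sum_le_sum fun x _ => step1 x
    have herase : ∑ x ∈ Finset.univ.erase xs, (- h x) * (Hl x + Hc x)
        = h xs * (Hl xs + Hc xs) := by
      have : ∑ x, (- h x) * (Hl x + Hc x) = 0 := by
        rw [← neg_eq_zero.mpr hE, ← Finset.sum_neg_distrib]
        exact Finset.sum_congr rfl fun x _ => by ring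
      have h2 := Finset.add_sum_erase Finset.univ (fun x => (- h x) * (Hl x + Hc x))
        (Finset.mem_univ xs)
      rw [this] at h2
      linear_combination h2
    have hfin : h xs * (Hl xs + Hc xs) + pr xs * (Hl xs + Hc xs) ≤ D := by
      rw [hsplit]
      linarith [hrest, herase]
    have hHcxs : h xs ≤ Hc xs := by
      have := hHl0 xs; simp only [hHc]; linarith
    have t1 : h xs * h xs ≤ h xs * (Hl xs + Hc xs) := by
      have : h xs ≤ Hl xs + Hc xs := le_trans hHcxs (by linarith [hHl0 xs])
      exact mul_le_mul_of_nonneg_left this hM0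
    have t2 : 0 ≤ pr xs * (Hl xs + Hc xs) := mul_nonneg (hp0 xs) (hA xs)
    linarith
  rw [hM]
  nlinarith [h2S, hDbound]

open Classical in
lemma probR0_toReal {T : Type} [Fintype T] [MeasurableSpace T] [MeasurableSingletonClass T]
    (rlt : T → T → Prop) (p q : PMF T) :
    (probR0 rlt p q).toReal = ∑ x : T, ∑ y : T, (p x).toReal * (q y).toReal *
      (if rlt y x then 1 else if x = y then (2:ℝ)⁻¹ else 0) := by
  have hterm : ∀ x y : T,
      (p x * q y * (if rlt y x then 1 else if x = y then (2:ℝ≥0∞)⁻¹ else 0)) ≠ ⊤ := by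
    intro x y
    refine ENNReal.mul_ne_top (ENNReal.mul_ne_top (p.apply_ne_top x) (q.apply_ne_top y)) ?_
    split_ifs <;> simp
  rw [probR0_eq_sum rlt p q, ENNReal.toReal_sum (fun x _ => by
    exact (ENNReal.sum_lt_top.mpr (fun y _ => lt_top_iff_ne_top.mpr (hterm x y))).ne)]
  refine Finset.sum_congr rfl fun x _ => ?_
  rw [ENNReal.toReal_sum (fun y _ => hterm x y)]
  refine Finset.sum_congr rfl fun y _ => ?_
  rw [ENNReal.toReal_mul, ENNReal.toReal_mul]
  congr 1
  split_ifs <;> simp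

lemma pmf_sum_toReal {T : Type} [Fintype T] (p : PMF T) :
    ∑ x : T, (p x).toReal = 1 := by
  have h1 : ∑ x : T, p x = 1 := by rw [← tsum_fintype (L := SummationFilter.unconditional _)]; exact p.tsum_coe
  rw [← ENNReal.toReal_sum (fun x _ => p.apply_ne_top x), h1, ENNReal.toReal_one]

/-- **Proposition (lower bound via the maximal excess).** Let `p, q` be probability
distributions on a finite set `T`, `h x := q x − p x`, and `⊏` a strict total order on
`T` such that `h x > h x'` implies `x ⊏ x'` and `h x < h x'` implies `x' ⊏ x`.  Then
`P(R_{p,q} = 0) ≥ 1/2 + (1/2) (max_{x ∈ T} (q x − p x))²`. -/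
theorem probR0_ge_half_add_max_sq
    {T : Type} [Fintype T] [Nonempty T] [MeasurableSpace T] [MeasurableSingletonClass T]
    (rlt : T → T → Prop) (hr : IsStrictTotalOrder T rlt)
    (p q : PMF T)
    (horder₁ : ∀ x x' : T,
      (q x).toReal - (p x).toReal > (q x').toReal - (p x').toReal → rlt x x')
    (horder₂ : ∀ x x' : T,
      (q x).toReal - (p x).toReal < (q x').toReal - (p x').toReal → rlt x' x) :
    1 / 2 + 1 / 2 *
        (Finset.univ.sup' Finset.univ_nonempty
          (fun x : T => (q x).toReal - (p x).toReal)) ^ 2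
      ≤ (probR0 rlt p q).toReal := by
  rw [probR0_toReal rlt p q]
  exact core_ineq rlt hr (fun x => (p x).toReal) (fun x => (q x).toReal)
    (fun x => ENNReal.toReal_nonneg) (fun x => ENNReal.toReal_nonneg)
    (pmf_sum_toReal p) (pmf_sum_toReal q) horder₁ horder₂

end
end

section
/- Fix a strict total order ⊏ on a finite set T. For all probability distributions p, q on T and every δ > 0, there exist ε > 0 and a probability distribution p_ε on T that is ε-discrete with respect to q (i.e., |(q(a) − p_ε(a)) − (q(b) − p_ε(b))| ≥ ε for all distinct a, b ∈ T) such that for all subsets B, C ⊆ T with p(B) > 0, p_ε(B) > 0 and q(C) > 0, one has |P(R_{p,q} = 0 | X ∈ B, Y ∈ C) − P(R_{p_ε,q} = 0 | X_ε ∈ B, Y ∈ C)| < δ, where X ~ p, X_ε ~ p_ε, Y ~ q. -/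
open MeasureTheory ProbabilityTheory
open scoped ENNReal

noncomputable section

lemma smul_prod_meas {α β : Type*} [MeasurableSpace α] [MeasurableSpace β]
    (c : ℝ≥0∞) (μ : Measure α) (ν : Measure β) [SFinite μ] [SFinite ν] :
    (c • μ).prod ν = c • (μ.prod ν) := by
  ext s hs
  rw [Measure.prod_apply hs, Measure.smul_apply, Measure.prod_apply hs,
    MeasureTheory.lintegral_smul_measure, smul_eq_mul]

lemma toMeasure_linear {T : Type} [MeasurableSpace T] [MeasurableSingletonClass T]
    (p w pe : PMF T) (c1 c2 : ℝ≥0∞) (h : ∀ a, pe a = c1 * p a + c2 * w a) :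
    pe.toMeasure = c1 • p.toMeasure + c2 • w.toMeasure := by
  ext s hs
  rw [Measure.add_apply, Measure.smul_apply, Measure.smul_apply,
    PMF.toMeasure_apply pe hs, PMF.toMeasure_apply p hs, PMF.toMeasure_apply w hs,
    smul_eq_mul, smul_eq_mul, ← ENNReal.tsum_mul_left, ← ENNReal.tsum_mul_left,
    ← ENNReal.tsum_add]
  congr 1; ext a
  by_cases ha : a ∈ s <;> simp [Set.indicator_apply, ha, h a]

lemma joint_linear {T : Type} [MeasurableSpace T] [MeasurableSingletonClass T]
    (p w pe q : PMF T) (c1 c2 : ℝ≥0∞) (h : ∀ a, pe a = c1 * p a + c2 * w a) :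
    (pe.toMeasure.prod q.toMeasure).prod fairCoin
      = c1 • ((p.toMeasure.prod q.toMeasure).prod fairCoin)
        + c2 • ((w.toMeasure.prod q.toMeasure).prod fairCoin) := by
  rw [toMeasure_linear p w pe c1 c2 h, Measure.add_prod, smul_prod_meas, smul_prod_meas,
      Measure.add_prod, smul_prod_meas, smul_prod_meas]

lemma ratio_bound (sp dp sw dw m t δ : ℝ)
    (hsp : 0 ≤ sp) (hspd : sp ≤ dp) (hdp1 : dp ≤ 1)
    (hsw : 0 ≤ sw) (hswd : sw ≤ dw) (hdw1 : dw ≤ 1)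
    (hm : 0 < m) (hmdp : m ≤ dp) (ht0 : 0 < t) (ht1 : t ≤ 1/2)
    (htδ : t < δ * m^2 / 2) :
    |sp/dp - ((1-t)*sp + t*sw)/((1-t)*dp + t*dw)| < δ := by
  have hdp : 0 < dp := lt_of_lt_of_le hm hmdp
  have hdw0 : 0 ≤ dw := le_trans hsw hswd
  have hdpe : m/2 ≤ (1-t)*dp + t*dw := by nlinarith
  have hdpe0 : 0 < (1-t)*dp + t*dw := lt_of_lt_of_le (by positivity) hdpe
  rw [div_sub_div _ _ hdp.ne' hdpe0.ne', abs_div]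
  have hnum : |sp*((1-t)*dp+t*dw) - dp*((1-t)*sp + t*sw)| ≤ t := by
    have he : sp*((1-t)*dp+t*dw) - dp*((1-t)*sp + t*sw) = t*(sp*dw - dp*sw) := by ring
    rw [he, abs_mul, abs_of_pos ht0]
    have h1 : |sp*dw - dp*sw| ≤ 1 := by
      rw [abs_le]; constructor <;> nlinarith
    nlinarith
  have hden : m*(m/2) ≤ |dp*((1-t)*dp+t*dw)| := by
    rw [abs_of_pos (mul_pos hdp hdpe0)]
    have := mul_le_mul hmdp hdpe (by positivity) hdp.le
    linarith
  calc |sp*((1-t)*dp+t*dw) - dp*((1-t)*sp + t*sw)| / |dp*((1-t)*dp+t*dw)|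
      ≤ t / (m*(m/2)) := div_le_div₀ ht0.le hnum (by positivity) hden
    _ < δ := by rw [div_lt_iff₀ (by positivity)]; nlinarith

lemma exists_w {T : Type} [Fintype T] [Nonempty T] (q : PMF T) :
    ∃ w : PMF T, ∀ a b : T, a ≠ b →
      (q a).toReal - (w a).toReal ≠ (q b).toReal - (w b).toReal := by
  classical
  set n := Fintype.card T with hn
  have hn0 : 0 < n := Fintype.card_pos
  have hnR : (1:ℝ) ≤ (n:ℝ) := by exact_mod_cast hn0
  have hnpos : (0:ℝ) < (n:ℝ) := by linarith
  set e := Fintype.equivFin T with he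
  set g : Fin n → ℝ := fun i => (q (e.symm i)).toReal with hg
  set σ := Tuple.sort g with hσ
  set α : ℝ := 1/(n^2 : ℝ) with hα
  have hαpos : 0 < α := by positivity
  set rk : T → Fin n := fun a => σ.symm (e a) with hrk
  set wr : T → ℝ := fun a => 1/(n:ℝ) - α*((rk a : ℝ) - ((n:ℝ)-1)/2) with hwr
  have hrkle : ∀ a, ((rk a : ℕ) : ℝ) + 1 ≤ (n:ℝ) := by
    intro a; exact_mod_cast (rk a).2
  have hwrpos : ∀ a, 0 < wr a := by
    intro a
    have h1 := hrkle a
    have key : 0 < 1/(n:ℝ) - α*(((n:ℝ)-1)/2) := by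
      have heq : 1/(n:ℝ) - α*(((n:ℝ)-1)/2) = ((n:ℝ)+1)/(2*(n:ℝ)^2) := by
        rw [hα]; field_simp; ring
      rw [heq]; positivity
    have h2 : α*((rk a : ℝ) - ((n:ℝ)-1)/2) ≤ α*(((n:ℝ)-1)/2) := by
      apply mul_le_mul_of_nonneg_left _ hαpos.le
      linarith
    simp only [hwr]; linarith
  have h1 : ∑ i : Fin n, ((i:ℕ):ℝ) = (n:ℝ)*((n:ℝ)-1)/2 := by
    rw [Fin.sum_univ_eq_sum_range (fun i => ((i:ℕ):ℝ))]
    have h2 := Finset.sum_range_id_mul_two n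
    have h3 : ((∑ i ∈ Finset.range n, i : ℕ) : ℝ) * 2 = (n:ℝ) * ((n:ℝ) - 1) := by
      rw [show ((∑ i ∈ Finset.range n, i : ℕ) : ℝ) * 2
          = (((∑ i ∈ Finset.range n, i) * 2 : ℕ) : ℝ) by push_cast; ring, h2]
      push_cast [Nat.cast_sub hn0]
      ring
    rw [show ∑ i ∈ Finset.range n, ((i:ℕ):ℝ) = ((∑ i ∈ Finset.range n, i : ℕ) : ℝ) by
      push_cast; rfl]
    linarith
  have hsumT : ∑ a : T, wr a = 1 := by
    have hE : ∑ a : T, wr a = ∑ i : Fin n, (1/(n:ℝ) - α*(((i:ℕ):ℝ) - ((n:ℝ)-1)/2)) := by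
      apply Fintype.sum_equiv (e.trans σ.symm)
      intro a; rfl
    rw [hE]
    calc ∑ i : Fin n, (1/(n:ℝ) - α*(((i:ℕ):ℝ) - ((n:ℝ)-1)/2))
        = ∑ i : Fin n, ((1/(n:ℝ) + α*(((n:ℝ)-1)/2)) - α * ((i:ℕ):ℝ)) :=
          Finset.sum_congr rfl (by intros; ring)
      _ = n • (1/(n:ℝ) + α*(((n:ℝ)-1)/2)) - α * ∑ i : Fin n, ((i:ℕ):ℝ) := by
          rw [Finset.sum_sub_distrib, Finset.sum_const, Finset.card_univ, Fintype.card_fin,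
            Finset.mul_sum]
      _ = 1 := by
          rw [h1, nsmul_eq_mul, hα]; field_simp; ring
  have hwsum : ∑ a : T, ENNReal.ofReal (wr a) = 1 := by
    rw [← ENNReal.ofReal_sum_of_nonneg (fun a _ => (hwrpos a).le), hsumT, ENNReal.ofReal_one]
  refine ⟨PMF.ofFintype (fun a => ENNReal.ofReal (wr a)) hwsum, ?_⟩
  · intro a b hab
    have hwval : ∀ x, ((PMF.ofFintype (fun a => ENNReal.ofReal (wr a)) hwsum) x).toReal = wr x := by
      intro x; rw [PMF.ofFintype_apply, ENNReal.toReal_ofReal (hwrpos x).le]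
    have key : ∀ x : T,
        (q x).toReal - ((PMF.ofFintype (fun a => ENNReal.ofReal (wr a)) hwsum) x).toReal
        = (g (σ (rk x)) + α * ((rk x : ℕ):ℝ)) - (1/(n:ℝ) + α*(((n:ℝ)-1)/2)) := by
      intro x
      rw [hwval]
      have hgx : g (σ (rk x)) = (q x).toReal := by
        simp [hg, hrk]
      rw [hgx]; simp only [hwr]; ring
    rw [key a, key b]
    have hV : StrictMono (fun i : Fin n => g (σ i) + α * ((i:ℕ):ℝ)) := by
      intro i j hij
      have h4 : g (σ i) ≤ g (σ j) := Tuple.monotone_sort g (le_of_lt hij)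
      have h5 : α * ((i:ℕ):ℝ) < α * ((j:ℕ):ℝ) := by
        apply mul_lt_mul_of_pos_left _ hαpos
        exact_mod_cast hij
      dsimp only; linarith
    have hrkab : rk a ≠ rk b := fun h => hab ((e.trans σ.symm).injective h)
    have := hV.injective.ne hrkab
    simp only [ne_eq, sub_left_inj]
    exact this

/-- **Lemma (approximation by an `ε`-discrete distribution).** Fix a strict total order
`⊏` on a finite set `T`.  For all probability distributions `p, q` on `T` and every
`δ > 0`, there exist `ε > 0` and a probability distribution `p_ε` on `T` that is
`ε`-discrete with respect to `q` (i.e. `|(q a − p_ε a) − (q b − p_ε b)| ≥ ε` for all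
distinct `a, b`), such that for all subsets `B, C ⊆ T` with `p(B) > 0`, `p_ε(B) > 0` and
`q(C) > 0`, one has
`|P(R_{p,q} = 0 | X ∈ B, Y ∈ C) − P(R_{p_ε,q} = 0 | X_ε ∈ B, Y ∈ C)| < δ`. -/
theorem probR0cond_approx_eps_discrete
    {T : Type} [Fintype T] [Nonempty T] [MeasurableSpace T] [MeasurableSingletonClass T]
    (rlt : T → T → Prop) (hr : IsStrictTotalOrder T rlt) :
    ∀ (p q : PMF T) (δ : ℝ), 0 < δ →
      ∃ ε : ℝ, 0 < ε ∧
        ∃ pe : PMF T,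
          (∀ a b : T, a ≠ b →
            ε ≤ |((q a).toReal - (pe a).toReal) - ((q b).toReal - (pe b).toReal)|) ∧
          ∀ B C : Set T, 0 < p.toMeasure B → 0 < pe.toMeasure B → 0 < q.toMeasure C →
            |(probR0cond rlt p q B C).toReal - (probR0cond rlt pe q B C).toReal| < δ := by
  classical
  intro p q δ hδ
  obtain ⟨w, hwsep⟩ := exists_w q
  -- real values of the PMFs
  have hval01 : ∀ (r : PMF T) (a : T), 0 ≤ (r a).toReal ∧ (r a).toReal ≤ 1 := by
    intro r a
    refine ⟨ENNReal.toReal_nonneg, ?_⟩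
    simpa using ENNReal.toReal_mono ENNReal.one_ne_top (r.coe_le_one a)
  set d : T → ℝ := fun a => (q a).toReal - (p a).toReal with hd
  set v : T → ℝ := fun a => (q a).toReal - (w a).toReal with hv
  have hvabs : ∀ a, |v a| ≤ 1 := by
    intro a
    have h1 := hval01 q a; have h2 := hval01 w a
    rw [abs_le]; constructor <;> [skip; skip] <;> simp only [hv] <;>
      [linarith [h1.1, h1.2, h2.1, h2.2]; linarith [h1.1, h1.2, h2.1, h2.2]]
  -- the minimal nonzero gap γ of d
  set SΓ : Finset ℝ := insert 1 (((Finset.univ.offDiag).filter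
      (fun ab : T × T => d ab.1 ≠ d ab.2)).image
      (fun ab : T × T => |d ab.1 - d ab.2|)) with hSΓ
  have hSΓne : SΓ.Nonempty := Finset.insert_nonempty _ _
  set γ := SΓ.min' hSΓne with hγ
  have hγpos : 0 < γ := by
    rw [hγ]
    apply (Finset.lt_min'_iff _ _).2
    intro y hy
    rw [hSΓ] at hy
    rcases Finset.mem_insert.1 hy with h | h
    · rw [h]; norm_num
    · obtain ⟨ab, hab, rfl⟩ := Finset.mem_image.1 h
      exact abs_pos.2 (sub_ne_zero.2 (Finset.mem_filter.1 hab).2)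
  have hγle : ∀ a b : T, a ≠ b → d a ≠ d b → γ ≤ |d a - d b| := by
    intro a b hab hd'
    apply Finset.min'_le
    rw [hSΓ]
    exact Finset.mem_insert_of_mem (Finset.mem_image.2 ⟨(a,b), Finset.mem_filter.2
      ⟨Finset.mem_offDiag.2 ⟨Finset.mem_univ _, Finset.mem_univ _, hab⟩, hd'⟩, rfl⟩)
  -- minimal positive atoms
  have hminatom : ∀ r : PMF T, ∃ m : ℝ, 0 < m ∧
      ∀ B : Set T, 0 < r.toMeasure B → m ≤ (r.toMeasure B).toReal := by
    intro r
    obtain ⟨a0, ha0⟩ := r.support_nonempty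
    set Sr := (Finset.univ.filter (fun a : T => r a ≠ 0)).image (fun a => (r a).toReal) with hSr
    have hSrne : Sr.Nonempty :=
      ⟨(r a0).toReal, Finset.mem_image.2 ⟨a0, Finset.mem_filter.2
        ⟨Finset.mem_univ _, (PMF.mem_support_iff r a0).1 ha0⟩, rfl⟩⟩
    refine ⟨Sr.min' hSrne, ?_, ?_⟩
    · apply (Finset.lt_min'_iff _ _).2
      intro y hy
      obtain ⟨a, ha, rfl⟩ := Finset.mem_image.1 hy
      exact ENNReal.toReal_pos (Finset.mem_filter.1 ha).2 (r.apply_ne_top a)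
    · intro B hB
      have hmeas : MeasurableSet B := (Set.toFinite B).measurableSet
      have hnd : ¬ Disjoint r.support B := by
        intro hdis
        exact hB.ne' ((r.toMeasure_apply_eq_zero_iff hmeas).2 hdis)
      obtain ⟨a, haS, haB⟩ := Set.not_disjoint_iff.1 hnd
      have h1 : r a ≤ r.toMeasure B := by
        rw [← r.toMeasure_apply_singleton a (measurableSet_singleton a)]
        exact measure_mono (Set.singleton_subset_iff.2 haB)
      have h2 : (r a).toReal ≤ (r.toMeasure B).toReal :=
        ENNReal.toReal_mono (measure_ne_top _ _) h1
      have h3 : Sr.min' hSrne ≤ (r a).toReal :=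
        Finset.min'_le _ _ (Finset.mem_image.2 ⟨a, Finset.mem_filter.2
          ⟨Finset.mem_univ _, (PMF.mem_support_iff r a).1 haS⟩, rfl⟩)
      linarith
  obtain ⟨mp, hmppos, hmple⟩ := hminatom p
  obtain ⟨mq, hmqpos, hmqle⟩ := hminatom q
  set m : ℝ := mp * mq with hm
  have hmpos : 0 < m := mul_pos hmppos hmqpos
  -- choice of t
  set t : ℝ := min (1/2) (min (γ/8) (δ*m^2/4)) with ht
  have ht0 : 0 < t := lt_min (by norm_num) (lt_min (by positivity) (by positivity))
  have ht1 : t ≤ 1/2 := min_le_left _ _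
  have htγ : t ≤ γ/8 := le_trans (min_le_right _ _) (min_le_left _ _)
  have htδ : t < δ*m^2/2 := by
    have : t ≤ δ*m^2/4 := le_trans (min_le_right _ _) (min_le_right _ _)
    nlinarith
  -- the perturbed PMF pe
  have hsumr : ∀ r : PMF T, ∑ a : T, (r a).toReal = 1 := by
    intro r
    have h1 := r.tsum_coe
    rw [tsum_fintype] at h1
    rw [← ENNReal.toReal_sum (fun a _ => r.apply_ne_top a), h1, ENNReal.toReal_one]
  set fpe : T → ℝ := fun a => (1-t)*(p a).toReal + t*(w a).toReal with hfpe
  have hfpos : ∀ a, 0 ≤ fpe a := fun a =>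
    add_nonneg (mul_nonneg (by linarith) ENNReal.toReal_nonneg)
      (mul_nonneg ht0.le ENNReal.toReal_nonneg)
  have hsumfpe : ∑ a : T, ENNReal.ofReal (fpe a) = 1 := by
    rw [← ENNReal.ofReal_sum_of_nonneg (fun a _ => hfpos a)]
    have hone : ∑ a : T, fpe a = 1 := by
      simp only [hfpe]
      rw [Finset.sum_add_distrib, ← Finset.mul_sum, ← Finset.mul_sum, hsumr p, hsumr w]
      ring
    rw [hone, ENNReal.ofReal_one]
  set pe : PMF T := PMF.ofFintype (fun a => ENNReal.ofReal (fpe a)) hsumfpe with hpe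
  have hpeval : ∀ a, (pe a).toReal = fpe a := by
    intro a; rw [hpe, PMF.ofFintype_apply, ENNReal.toReal_ofReal (hfpos a)]
  have hpelin : ∀ a, pe a = ENNReal.ofReal (1-t) * p a + ENNReal.ofReal t * w a := by
    intro a
    rw [hpe, PMF.ofFintype_apply]
    simp only [hfpe]
    rw [ENNReal.ofReal_add (mul_nonneg (by linarith) ENNReal.toReal_nonneg)
        (mul_nonneg ht0.le ENNReal.toReal_nonneg),
      ENNReal.ofReal_mul (by linarith), ENNReal.ofReal_mul ht0.le,
      ENNReal.ofReal_toReal (p.apply_ne_top a), ENNReal.ofReal_toReal (w.apply_ne_top a)]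
  -- the gap function
  have hG : ∀ a, (q a).toReal - (pe a).toReal = (1-t)*d a + t*v a := by
    intro a; rw [hpeval a]; simp only [hfpe, hd, hv]; ring
  have hGne : ∀ a b : T, a ≠ b →
      ((1-t)*d a + t*v a) - ((1-t)*d b + t*v b) ≠ 0 := by
    intro a b hab
    have hvab : v a ≠ v b := hwsep a b hab
    by_cases hdd : d a = d b
    · have he : ((1-t)*d a + t*v a) - ((1-t)*d b + t*v b) = t*(v a - v b) := by
        rw [hdd]; ring
      rw [he]
      exact mul_ne_zero ht0.ne' (sub_ne_zero.2 hvab)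
    · have hγab := hγle a b hab hdd
      intro h0
      have h0' : (1-t)*(d a - d b) = -(t*(v a - v b)) := by linear_combination h0
      have hbound : |t*(v a - v b)| ≤ 2*t := by
        rw [abs_mul, abs_of_pos ht0]
        have h5 : |v a - v b| ≤ 2 := by
          calc |v a - v b| ≤ |v a| + |v b| := abs_sub _ _
            _ ≤ 2 := by linarith [hvabs a, hvabs b]
        nlinarith
      have h3 : (1-t)*|d a - d b| ≤ 2*t := by
        have : |(1-t)*(d a - d b)| = (1-t)*|d a - d b| := by
          rw [abs_mul, abs_of_pos (show (0:ℝ) < 1-t by linarith)]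
        rw [← this, h0', abs_neg]
        exact hbound
      have h4 : γ/2 ≤ (1-t)*|d a - d b| := by nlinarith [abs_nonneg (d a - d b)]
      linarith
  -- the value of ε
  set SE : Finset ℝ := insert (1:ℝ) ((Finset.univ.offDiag).image
      (fun ab : T × T => |((q ab.1).toReal - (pe ab.1).toReal)
        - ((q ab.2).toReal - (pe ab.2).toReal)|)) with hSE
  have hSEne : SE.Nonempty := Finset.insert_nonempty _ _
  refine ⟨SE.min' hSEne, ?_, pe, ?_, ?_⟩
  · apply (Finset.lt_min'_iff _ _).2
    intro y hy
    rw [hSE] at hy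
    rcases Finset.mem_insert.1 hy with h | h
    · rw [h]; norm_num
    · obtain ⟨ab, hab, rfl⟩ := Finset.mem_image.1 h
      have habne : ab.1 ≠ ab.2 := (Finset.mem_offDiag.1 hab).2.2
      rw [hG ab.1, hG ab.2]
      exact abs_pos.2 (hGne ab.1 ab.2 habne)
  · intro a b hab
    exact Finset.min'_le _ _ (Finset.mem_insert_of_mem (Finset.mem_image.2
      ⟨(a,b), Finset.mem_offDiag.2 ⟨Finset.mem_univ _, Finset.mem_univ _, hab⟩, rfl⟩))
  · intro B C hB hpeB hC
    set F : Set ((T × T) × Bool) := {z | z.1.1 ∈ B ∧ z.1.2 ∈ C} with hF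
    set E : Set ((T × T) × Bool) :=
      {z | rlt z.1.2 z.1.1 ∨ (z.1.1 = z.1.2 ∧ z.2 = true)} with hE
    have hFmeas : MeasurableSet F := (Set.toFinite F).measurableSet
    set μp := (p.toMeasure.prod q.toMeasure).prod fairCoin with hμp
    set μw := (w.toMeasure.prod q.toMeasure).prod fairCoin with hμw
    set μpe := (pe.toMeasure.prod q.toMeasure).prod fairCoin with hμpe
    haveI hμpP : IsProbabilityMeasure μp := by rw [hμp]; infer_instance
    haveI hμwP : IsProbabilityMeasure μw := by rw [hμw]; infer_instance
    haveI hμpeP : IsProbabilityMeasure μpe := by rw [hμpe]; infer_instance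
    have hlin : μpe = ENNReal.ofReal (1-t) • μp + ENNReal.ofReal t • μw :=
      joint_linear p w pe q _ _ hpelin
    have hFrect : F = (B ×ˢ C) ×ˢ (Set.univ : Set Bool) := by
      ext z; simp [hF, Set.mem_prod]
    have hμpF : μp F = p.toMeasure B * q.toMeasure C := by
      rw [hFrect, hμp, Measure.prod_prod, Measure.prod_prod, measure_univ, mul_one]
    have hμwF : μw F = w.toMeasure B * q.toMeasure C := by
      rw [hFrect, hμw, Measure.prod_prod, Measure.prod_prod, measure_univ, mul_one]
    -- conditional probabilities as quotients
    have hcondp : probR0cond rlt p q B C = (μp F)⁻¹ * μp (F ∩ E) :=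
      ProbabilityTheory.cond_apply hFmeas μp E
    have hcondpe : probR0cond rlt pe q B C = (μpe F)⁻¹ * μpe (F ∩ E) :=
      ProbabilityTheory.cond_apply hFmeas μpe E
    -- real number values
    set sp : ℝ := (μp (F ∩ E)).toReal with hsp
    set dp : ℝ := (μp F).toReal with hdp
    set sw : ℝ := (μw (F ∩ E)).toReal with hsw
    set dw : ℝ := (μw F).toReal with hdw
    have honemt : (0:ℝ) ≤ 1 - t := by linarith
    have hfin : ∀ (μ : Measure ((T × T) × Bool)) [IsProbabilityMeasure μ] (s : Set ((T × T) × Bool)) (c : ℝ≥0∞),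
        c ≠ ∞ → c * μ s ≠ ∞ := by
      intro μ _ s c hc
      exact ENNReal.mul_ne_top hc (measure_ne_top _ _)
    have hpeFE : (μpe (F ∩ E)).toReal = (1-t)*sp + t*sw := by
      rw [hlin]
      rw [Measure.add_apply, Measure.smul_apply, Measure.smul_apply, smul_eq_mul, smul_eq_mul,
        ENNReal.toReal_add (hfin μp _ _ ENNReal.ofReal_ne_top) (hfin μw _ _ ENNReal.ofReal_ne_top),
        ENNReal.toReal_mul, ENNReal.toReal_mul, ENNReal.toReal_ofReal honemt,
        ENNReal.toReal_ofReal ht0.le]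
    have hpeF : (μpe F).toReal = (1-t)*dp + t*dw := by
      rw [hlin]
      rw [Measure.add_apply, Measure.smul_apply, Measure.smul_apply, smul_eq_mul, smul_eq_mul,
        ENNReal.toReal_add (hfin μp _ _ ENNReal.ofReal_ne_top) (hfin μw _ _ ENNReal.ofReal_ne_top),
        ENNReal.toReal_mul, ENNReal.toReal_mul, ENNReal.toReal_ofReal honemt,
        ENNReal.toReal_ofReal ht0.le]
    have h1 : (probR0cond rlt p q B C).toReal = sp / dp := by
      rw [hcondp, ENNReal.toReal_mul, ENNReal.toReal_inv, inv_mul_eq_div]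
    have h2 : (probR0cond rlt pe q B C).toReal = ((1-t)*sp + t*sw) / ((1-t)*dp + t*dw) := by
      rw [hcondpe, ENNReal.toReal_mul, ENNReal.toReal_inv, inv_mul_eq_div, hpeFE, hpeF]
    rw [h1, h2]
    -- bounds for ratio_bound
    have htoReal_le : ∀ (μ : Measure ((T × T) × Bool)) [IsProbabilityMeasure μ]
        (s s' : Set ((T × T) × Bool)), s ⊆ s' → (μ s).toReal ≤ (μ s').toReal := by
      intro μ _ s s' hss
      exact ENNReal.toReal_mono (measure_ne_top _ _) (measure_mono hss)
    have hle1 : ∀ (μ : Measure ((T × T) × Bool)) [IsProbabilityMeasure μ]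
        (s : Set ((T × T) × Bool)), (μ s).toReal ≤ 1 := by
      intro μ _ s
      simpa using ENNReal.toReal_mono ENNReal.one_ne_top prob_le_one
    have hmdp : m ≤ dp := by
      have e1 : dp = (p.toMeasure B).toReal * (q.toMeasure C).toReal := by
        rw [hdp, hμpF, ENNReal.toReal_mul]
      rw [e1, hm]
      exact mul_le_mul (hmple B hB) (hmqle C hC) hmqpos.le
        (le_trans hmppos.le (hmple B hB))
    exact ratio_bound sp dp sw dw m t δ ENNReal.toReal_nonneg
      (htoReal_le μp _ _ Set.inter_subset_left) (hle1 μp F) ENNReal.toReal_nonneg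
      (htoReal_le μw _ _ Set.inter_subset_left) (hle1 μw F) hmpos hmdp ht0 ht1 htδ


end
end

section
/- Let T = {0,1,2,3} with its usual linear order <, let p := (1/2)δ₀ + (1/2)δ₃ and q := (1/2)δ₁ + (1/2)δ₂ (point masses). Then p ≠ q, yet the stochastic rank statistic computed with m = 1 is uniformly distributed on {0,1}: P(R = 0) = P(R = 1) = 1/2. Hence uniformity of the rank statistic for one particular value of m does not imply p = q. -/
open MeasureTheory ProbabilityTheory
open scoped ENNReal

noncomputable section

/-- The uniform distribution on the interval `[0,1]`. -/
def unifIcc : Measure ℝ := volume.restrict (Set.Icc 0 1)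

instance : IsProbabilityMeasure unifIcc := by
  constructor
  simp [unifIcc, Real.volume_Icc]


/-- The setup of the stochastic rank statistic: on a common probability space `(Ω, μ)`,
`X 0` has distribution `q`, the `X i` for `i ≠ 0` have distribution `p`, the `U i` are
uniform on `[0,1]`, and all of `X 0, …, X m, U 0, …, U m` are mutually independent.
(Mutual independence of the `2(m+1)` variables is recorded by independence of the pairs
`(X i, U i)` together with each pair having the product law.) -/
def IsRankSetup {T : Type} [MeasurableSpace T] {Ω : Type} [MeasurableSpace Ω]
    (μ : Measure Ω) (p q : Measure T) (m : ℕ)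
    (X : Fin (m + 1) → Ω → T) (U : Fin (m + 1) → Ω → ℝ) : Prop :=
  (∀ i, Measurable (X i)) ∧ (∀ i, Measurable (U i)) ∧
  iIndepFun (fun i ω => (X i ω, U i ω)) μ ∧
  μ.map (fun ω => (X 0 ω, U 0 ω)) = q.prod unifIcc ∧
  ∀ i : Fin (m + 1), i ≠ 0 → μ.map (fun ω => (X i ω, U i ω)) = p.prod unifIcc

open scoped Classical in
/-- The stochastic rank statistic
`R = ∑_{j=1}^m (1[X j ≺ X 0] + 1[X j = X 0 ∧ U j < U 0])`. -/
def rankStat {T : Type} {Ω : Type} (r : T → T → Prop) (m : ℕ)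
    (X : Fin (m + 1) → Ω → T) (U : Fin (m + 1) → Ω → ℝ) (ω : Ω) : ℕ :=
  ∑ j : Fin m, ((if r (X j.succ ω) (X 0 ω) then 1 else 0) +
    (if X j.succ ω = X 0 ω ∧ U j.succ ω < U 0 ω then 1 else 0))

/-- **Remark (uniformity for a single `m` does not imply `p = q`).**  Let `T = {0,1,2,3}`
with its usual order, `p = (1/2)δ₀ + (1/2)δ₃` and `q = (1/2)δ₁ + (1/2)δ₂`.  Then `p ≠ q`,
yet the stochastic rank statistic computed with `m = 1` is uniformly distributed on
`{0, 1}`: `P(R = 0) = P(R = 1) = 1/2`. -/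
theorem srs_uniform_single_m_counterexample
    (p q : PMF (Fin 4))
    (hp0 : p 0 = 2⁻¹) (hp3 : p 3 = 2⁻¹) (hq1 : q 1 = 2⁻¹) (hq2 : q 2 = 2⁻¹) :
    p ≠ q ∧
      ∀ (Ω : Type) (_ : MeasurableSpace Ω) (μ : Measure Ω), IsProbabilityMeasure μ →
        ∀ (X : Fin (1 + 1) → Ω → Fin 4) (U : Fin (1 + 1) → Ω → ℝ),
          IsRankSetup μ p.toMeasure q.toMeasure 1 X U →
          μ {ω | rankStat (· < ·) 1 X U ω = 0} = 2⁻¹ ∧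
          μ {ω | rankStat (· < ·) 1 X U ω = 1} = 2⁻¹ := by
  -- the zero masses
  have hp12 : p 1 = 0 ∧ p 2 = 0 := by
    have h := p.tsum_coe
    rw [tsum_fintype, Fin.sum_univ_four, hp0, hp3] at h
    have h2 : (2⁻¹ : ℝ≥0∞) + p 1 + p 2 + 2⁻¹ = 2⁻¹ + 2⁻¹ + (p 1 + p 2) := by ring
    rw [h2, ENNReal.inv_two_add_inv_two] at h
    have h3 : p 1 + p 2 = 0 :=
      (ENNReal.add_right_inj (a := 1) ENNReal.one_ne_top).mp (by rw [add_zero]; exact h)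
    exact add_eq_zero.mp h3
  have hq03 : q 0 = 0 ∧ q 3 = 0 := by
    have h := q.tsum_coe
    rw [tsum_fintype, Fin.sum_univ_four, hq1, hq2] at h
    have h2 : q 0 + 2⁻¹ + 2⁻¹ + q 3 = 2⁻¹ + 2⁻¹ + (q 0 + q 3) := by ring
    rw [h2, ENNReal.inv_two_add_inv_two] at h
    have h3 : q 0 + q 3 = 0 :=
      (ENNReal.add_right_inj (a := 1) ENNReal.one_ne_top).mp (by rw [add_zero]; exact h)
    exact add_eq_zero.mp h3
  obtain ⟨hp1, hp2⟩ := hp12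
  obtain ⟨hq0, hq3⟩ := hq03
  constructor
  · intro h
    rw [h, hq0] at hp0
    exact ENNReal.inv_ne_zero.mpr ENNReal.ofNat_ne_top hp0.symm
  intro Ω mΩ μ hμ X U hsetup
  obtain ⟨hXm, hUm, hindep, hlaw0, hlaw⟩ := hsetup
  have hlaw1 := hlaw 1 (by decide)
  -- marginal laws
  have hX0law : μ.map (X 0) = q.toMeasure := by
    have h1 : μ.map (X 0) = (μ.map (fun ω => (X 0 ω, U 0 ω))).map Prod.fst := by
      rw [Measure.map_map measurable_fst ((hXm 0).prodMk (hUm 0))]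
      rfl
    rw [h1, hlaw0, Measure.map_fst_prod]
    simp
  have hX1law : μ.map (X 1) = p.toMeasure := by
    have h1 : μ.map (X 1) = (μ.map (fun ω => (X 1 ω, U 1 ω))).map Prod.fst := by
      rw [Measure.map_map measurable_fst ((hXm 1).prodMk (hUm 1))]
      rfl
    rw [h1, hlaw1, Measure.map_fst_prod]
    simp
  -- independence of X 0 and X 1
  have hind : IndepFun (X 0) (X 1) μ :=
    (hindep.indepFun (by decide : (0 : Fin 2) ≠ 1)).comp measurable_fst measurable_fst
  have hjoint : μ.map (fun ω => (X 0 ω, X 1 ω)) = q.toMeasure.prod p.toMeasure := by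
    rw [← hX0law, ← hX1law]
    exact (indepFun_iff_map_prod_eq_prod_map_map (hXm 0).aemeasurable
      (hXm 1).aemeasurable).mp hind
  have hpairm : Measurable (fun ω => (X 0 ω, X 1 ω)) := (hXm 0).prodMk (hXm 1)
  -- the strict-order event
  have hSm : MeasurableSet {z : Fin 4 × Fin 4 | z.2 < z.1} := (Set.toFinite _).measurableSet
  have hDm : MeasurableSet {z : Fin 4 × Fin 4 | z.2 = z.1} := (Set.toFinite _).measurableSet
  have hA : μ {ω | X 1 ω < X 0 ω} = 2⁻¹ := by
    have heq : {ω | X 1 ω < X 0 ω} = (fun ω => (X 0 ω, X 1 ω)) ⁻¹' {z | z.2 < z.1} := rfl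
    rw [heq, ← Measure.map_apply hpairm hSm, hjoint, Measure.prod_apply hSm,
      lintegral_countable', tsum_fintype, Fin.sum_univ_four]
    have e0 : (Prod.mk (0 : Fin 4) ⁻¹' {z : Fin 4 × Fin 4 | z.2 < z.1}) = ∅ := by
      ext b
      simp only [Set.mem_preimage, Set.mem_setOf_eq, Set.mem_empty_iff_false, iff_false]
      fin_cases b <;> decide
    have e1 : (Prod.mk (1 : Fin 4) ⁻¹' {z : Fin 4 × Fin 4 | z.2 < z.1}) = {0} := by
      ext b
      simp only [Set.mem_preimage, Set.mem_setOf_eq, Set.mem_singleton_iff]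
      fin_cases b <;> decide
    have e2 : (Prod.mk (2 : Fin 4) ⁻¹' {z : Fin 4 × Fin 4 | z.2 < z.1}) = {0, 1} := by
      ext b
      simp only [Set.mem_preimage, Set.mem_setOf_eq, Set.mem_insert_iff, Set.mem_singleton_iff]
      fin_cases b <;> decide
    have e3 : (Prod.mk (3 : Fin 4) ⁻¹' {z : Fin 4 × Fin 4 | z.2 < z.1}) = {0, 1, 2} := by
      ext b
      simp only [Set.mem_preimage, Set.mem_setOf_eq, Set.mem_insert_iff, Set.mem_singleton_iff]
      fin_cases b <;> decide
    rw [e0, e1, e2, e3]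
    simp only [PMF.toMeasure_apply_fintype, Fin.sum_univ_four, Set.indicator,
      PMF.toMeasure_apply_singleton _ _ (measurableSet_singleton _)]
    simp [hp0, hp1, hp2, hp3, hq0, hq1, hq2, hq3]
    rw [← mul_add, ENNReal.inv_two_add_inv_two, mul_one]
  have hD : μ {ω | X 1 ω = X 0 ω} = 0 := by
    have heq : {ω | X 1 ω = X 0 ω} = (fun ω => (X 0 ω, X 1 ω)) ⁻¹' {z | z.2 = z.1} := rfl
    rw [heq, ← Measure.map_apply hpairm hDm, hjoint, Measure.prod_apply hDm,
      lintegral_countable', tsum_fintype, Fin.sum_univ_four]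
    have e : ∀ a : Fin 4, (Prod.mk a ⁻¹' {z : Fin 4 × Fin 4 | z.2 = z.1}) = {a} := by
      intro a; ext b; simp [eq_comm]
    rw [e 0, e 1, e 2, e 3]
    simp only [PMF.toMeasure_apply_singleton _ _ (measurableSet_singleton _)]
    simp [hp0, hp1, hp2, hp3, hq0, hq1, hq2, hq3]
  have hB0 : μ {ω | X 1 ω = X 0 ω ∧ U 1 ω < U 0 ω} = 0 :=
    measure_mono_null (fun ω h => h.1) hD
  -- describe the rank events
  have hsucc : ((0 : Fin 1).succ : Fin 2) = 1 := rfl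
  have hsetR1 : {ω | rankStat (· < ·) 1 X U ω = 1}
      = {ω | X 1 ω < X 0 ω} ∪ {ω | X 1 ω = X 0 ω ∧ U 1 ω < U 0 ω} := by
    ext ω
    simp only [rankStat, Fin.sum_univ_one, hsucc, Set.mem_setOf_eq, Set.mem_union]
    by_cases h1 : X 1 ω < X 0 ω
    · have h2 : ¬(X 1 ω = X 0 ω ∧ U 1 ω < U 0 ω) := fun h => absurd (h.1 ▸ h1) (lt_irrefl _)
      simp [h1, h2]
    · by_cases h2 : X 1 ω = X 0 ω ∧ U 1 ω < U 0 ω <;> simp [h1, h2]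
  have hsetR0 : {ω | rankStat (· < ·) 1 X U ω = 0}
      = ({ω | X 1 ω < X 0 ω} ∪ {ω | X 1 ω = X 0 ω ∧ U 1 ω < U 0 ω})ᶜ := by
    ext ω
    simp only [rankStat, Fin.sum_univ_one, hsucc, Set.mem_setOf_eq, Set.mem_compl_iff,
      Set.mem_union]
    by_cases h1 : X 1 ω < X 0 ω
    · have h2 : ¬(X 1 ω = X 0 ω ∧ U 1 ω < U 0 ω) := fun h => absurd (h.1 ▸ h1) (lt_irrefl _)
      simp [h1, h2]
    · by_cases h2 : X 1 ω = X 0 ω ∧ U 1 ω < U 0 ω <;> simp [h1, h2]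
  have hmeasA : MeasurableSet {ω | X 1 ω < X 0 ω} := hpairm hSm
  have hmeasB : MeasurableSet {ω | X 1 ω = X 0 ω ∧ U 1 ω < U 0 ω} := by
    have : {ω | X 1 ω = X 0 ω ∧ U 1 ω < U 0 ω}
        = ((fun ω => (X 0 ω, X 1 ω)) ⁻¹' {z | z.2 = z.1})
          ∩ ((fun ω => (U 1 ω, U 0 ω)) ⁻¹' {u : ℝ × ℝ | u.1 < u.2}) := rfl
    rw [this]
    exact (hpairm hDm).inter (((hUm 1).prodMk (hUm 0))
      (measurableSet_lt measurable_fst measurable_snd))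
  have hAB : μ ({ω | X 1 ω < X 0 ω} ∪ {ω | X 1 ω = X 0 ω ∧ U 1 ω < U 0 ω}) = 2⁻¹ := by
    refine le_antisymm ((measure_union_le _ _).trans ?_) ?_
    · rw [hA, hB0, add_zero]
    · rw [← hA]; exact measure_mono Set.subset_union_left
  have hR1 : μ {ω | rankStat (· < ·) 1 X U ω = 1} = 2⁻¹ := by
    rw [hsetR1, hAB]
  refine ⟨?_, hR1⟩
  rw [hsetR0, prob_compl_eq_one_sub (hmeasA.union hmeasB), hAB, ENNReal.one_sub_inv_two]

end
end
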